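/- Euler's infinite product: π/(2·√2) = ∏_{k=1}^{∞} (4k)²/((4k − 1)·(4k + 1)), i.e. π/(2√2) = (4·4/(3·5)) · (8·8/(7·9)) · (12·12/(11·13)) · ⋯, where the infinite product is the limit of its partial products (equivalently, the product ∏_{k=1}^{∞} (1 + 1/(16k² − 1)) converges to π/(2√2)). -/

import Mathlib

open Filter Real

/-- E563 §5: Euler's infinite product
`π/(2√2) = (4·4/(3·5))·(8·8/(7·9))·(12·12/(11·13))·⋯`, understood as the limit of
the partial products. -/
theorem euler_infinite_product :
    Filter.Tendsto
      (fun N : ℕ => ∏ k ∈ Finset.range N,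
        (4 * ((k : ℝ) + 1)) ^ 2 / ((4 * ((k : ℝ) + 1) - 1) * (4 * ((k : ℝ) + 1) + 1)))
      Filter.atTop (nhds (Real.pi / (2 * Real.sqrt 2))) := by
  have h := Real.tendsto_euler_sin_prod (1/4 : ℝ)
  have hsin : Real.sin (π * (1/4)) = Real.sqrt 2 / 2 := by
    rw [show π * (1/4) = π/4 by ring, Real.sin_pi_div_four]
  rw [hsin] at h
  have h2 : 0 < Real.sqrt 2 := Real.sqrt_pos.mpr (by norm_num)
  have hqpos : ∀ j : ℕ, (0:ℝ) < 1 - (1/4:ℝ)^2 / ((j:ℝ)+1)^2 := by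
    intro j
    have h1 : (1:ℝ) ≤ (j:ℝ)+1 := by
      have := Nat.cast_nonneg (α := ℝ) j; linarith
    have : (1/4:ℝ)^2 / ((j:ℝ)+1)^2 ≤ (1/4:ℝ)^2 := by
      apply div_le_of_le_mul₀ (by positivity) (by positivity)
      nlinarith
    nlinarith
  have hlim : π / 4 / (Real.sqrt 2 / 2) = π / (2 * Real.sqrt 2) := by
    have hs : Real.sqrt 2 * Real.sqrt 2 = 2 := Real.mul_self_sqrt (by norm_num)
    field_simp
    nlinarith [Real.pi_pos]
  have htend := (tendsto_const_nhds (x := π/4) (f := atTop)).div h (by positivity)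
  rw [hlim] at htend
  refine htend.congr fun N => ?_
  simp only [Pi.div_apply]
  have hQpos : (0:ℝ) < ∏ j ∈ Finset.range N, ((1:ℝ) - (1/4:ℝ)^2 / ((j:ℝ)+1)^2) :=
    Finset.prod_pos fun j _ => hqpos j
  rw [eq_comm, eq_div_iff (by positivity)]
  have key : ∀ j : ℕ,
      (4*((j:ℝ)+1))^2 / ((4*((j:ℝ)+1)-1)*(4*((j:ℝ)+1)+1)) * (1 - (1/4:ℝ)^2/((j:ℝ)+1)^2) = 1 := by
    intro j
    have h1 : (1:ℝ) ≤ (j:ℝ)+1 := by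
      have := Nat.cast_nonneg (α := ℝ) j; linarith
    have ha : (4*((j:ℝ)+1)-1) ≠ 0 := by nlinarith
    have hb : (4*((j:ℝ)+1)+1) ≠ 0 := by nlinarith
    have hc : ((j:ℝ)+1) ≠ 0 := by positivity
    field_simp
    ring
  calc (∏ k ∈ Finset.range N,
        (4 * ((k : ℝ) + 1)) ^ 2 / ((4 * ((k : ℝ) + 1) - 1) * (4 * ((k : ℝ) + 1) + 1)))
        * (π * (1/4) * ∏ j ∈ Finset.range N, ((1:ℝ) - (1/4:ℝ)^2 / ((j:ℝ)+1)^2))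
      = π * (1/4) * ∏ j ∈ Finset.range N,
          ((4*((j:ℝ)+1))^2 / ((4*((j:ℝ)+1)-1)*(4*((j:ℝ)+1)+1)) * (1 - (1/4:ℝ)^2/((j:ℝ)+1)^2)) := by
        rw [Finset.prod_mul_distrib]; ring
    _ = π / 4 := by
        rw [Finset.prod_congr rfl fun j _ => key j, Finset.prod_const_one]; ring
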